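/- Let Z be a polynomial in variables c₁,…,c_d with nonnegative coefficients such that the differences of its exponent vectors span ℝ^d. Then log Z, as a function of (log c₁, …, log c_d) on ℝ^d, is strictly convex, and therefore the gradient map ∇log Z (with respect to the log variables) is injective. -/

import Mathlib

open Finset

lemma sumExp_pos {ι : Type*} [Fintype ι] (a w : ι → ℝ)
    (ha : ∀ i, 0 ≤ a i) (hne : ∃ i, a i ≠ 0) :
    0 < ∑ i, a i * Real.exp (w i) := by
  obtain ⟨i₀, hi₀⟩ := hne
  refine Finset.sum_pos' (fun i _ => mul_nonneg (ha i) (Real.exp_pos _).le)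
    ⟨i₀, Finset.mem_univ _, ?_⟩
  exact mul_pos ((ha i₀).lt_of_ne (Ne.symm hi₀)) (Real.exp_pos _)

lemma gm_lt {p q x y : ℝ} (hp : 0 ≤ p) (hq : 0 ≤ q) (hpq : p ≠ q)
    (hx : 0 < x) (hy : 0 < y) (hxy : x + y = 1) :
    p ^ x * q ^ y < x * p + y * q := by
  rcases eq_or_lt_of_le hp with hp0 | hp0
  · have hq0 : 0 < q := hq.lt_of_ne (by rw [← hp0] at hpq; exact hpq)
    rw [← hp0, Real.zero_rpow hx.ne']
    simpa using mul_pos hy hq0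
  rcases eq_or_lt_of_le hq with hq0 | hq0
  · rw [← hq0, Real.zero_rpow hy.ne']
    simpa using mul_pos hx hp0
  have hlog : Real.log p ≠ Real.log q := fun h =>
    hpq (Real.log_injOn_pos (Set.mem_Ioi.2 hp0) (Set.mem_Ioi.2 hq0) h)
  have := strictConvexOn_exp.2 (Set.mem_univ (Real.log p)) (Set.mem_univ (Real.log q))
    hlog hx hy hxy
  simp only [smul_eq_mul, Real.exp_log hp0, Real.exp_log hq0] at this
  calc p ^ x * q ^ y = Real.exp (x * Real.log p + y * Real.log q) := by
        rw [Real.exp_add, mul_comm x, mul_comm y, Real.exp_mul, Real.exp_mul,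
          Real.exp_log hp0, Real.exp_log hq0]
    _ < x * p + y * q := this

lemma key_holder {ι : Type*} [Fintype ι] (a u v : ι → ℝ) (ha : ∀ i, 0 ≤ a i)
    {x y : ℝ} (hx : 0 < x) (hy : 0 < y) (hxy : x + y = 1)
    (hmix : ∃ i i', a i ≠ 0 ∧ a i' ≠ 0 ∧ u i - v i ≠ u i' - v i') :
    ∑ i, a i * Real.exp (x * u i + y * v i)
      < (∑ i, a i * Real.exp (u i)) ^ x * (∑ i, a i * Real.exp (v i)) ^ y := by
  obtain ⟨i₀, i₁, h0, h1, hneq⟩ := hmix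
  set p : ι → ℝ := fun i => a i * Real.exp (u i) with hp
  set q : ι → ℝ := fun i => a i * Real.exp (v i) with hq
  set P : ℝ := ∑ i, p i with hP
  set Q : ℝ := ∑ i, q i with hQ
  have hPpos : 0 < P := sumExp_pos a u ha ⟨i₀, h0⟩
  have hQpos : 0 < Q := sumExp_pos a v ha ⟨i₀, h0⟩
  have hpnn : ∀ i, 0 ≤ p i := fun i => mul_nonneg (ha i) (Real.exp_pos _).le
  have hqnn : ∀ i, 0 ≤ q i := fun i => mul_nonneg (ha i) (Real.exp_pos _).le
  -- find the strict index
  have hstrict : ∃ i, a i ≠ 0 ∧ p i / P ≠ q i / Q := by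
    by_contra hcon
    push_neg at hcon
    have e0 := hcon i₀ h0
    have e1 := hcon i₁ h1
    apply hneq
    have ha0 : 0 < a i₀ := (ha i₀).lt_of_ne (Ne.symm h0)
    have ha1 : 0 < a i₁ := (ha i₁).lt_of_ne (Ne.symm h1)
    have f0 : Real.exp (u i₀ - v i₀) = P / Q := by
      rw [Real.exp_sub]
      field_simp [hp, hq] at e0 ⊢
      nlinarith [Real.exp_pos (u i₀), Real.exp_pos (v i₀)]
    have f1 : Real.exp (u i₁ - v i₁) = P / Q := by
      rw [Real.exp_sub]
      field_simp [hp, hq] at e1 ⊢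
      nlinarith [Real.exp_pos (u i₁), Real.exp_pos (v i₁)]
    exact Real.exp_eq_exp.mp (f0.trans f1.symm)
  obtain ⟨i₂, hi₂a, hi₂⟩ := hstrict
  -- each term equals p^x q^y
  have hterm : ∀ i, a i * Real.exp (x * u i + y * v i) = p i ^ x * q i ^ y := by
    intro i
    rcases eq_or_lt_of_le (ha i) with h | h
    · simp [hp, hq, ← h, Real.zero_rpow hx.ne']
    · rw [hp, hq]
      rw [Real.mul_rpow (ha i) (Real.exp_pos _).le, Real.mul_rpow (ha i) (Real.exp_pos _).le,
        ← Real.exp_mul, ← Real.exp_mul]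
      calc a i * Real.exp (x * u i + y * v i)
          = (a i ^ x * a i ^ y) * (Real.exp (u i * x) * Real.exp (v i * y)) := by
            rw [← Real.rpow_add h, hxy, Real.rpow_one, ← Real.exp_add]
            ring_nf
        _ = a i ^ x * Real.exp (u i * x) * (a i ^ y * Real.exp (v i * y)) := by ring
  -- per-term bound
  have hbound : ∀ i, p i ^ x * q i ^ y ≤ P ^ x * Q ^ y * (x * (p i / P) + y * (q i / Q)) := by
    intro i
    have := Real.geom_mean_le_arith_mean2_weighted hx.le hy.le
      (div_nonneg (hpnn i) hPpos.le) (div_nonneg (hqnn i) hQpos.le) hxy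
    rw [Real.div_rpow (hpnn i) hPpos.le, Real.div_rpow (hqnn i) hQpos.le] at this
    have hPx : (0:ℝ) < P ^ x := Real.rpow_pos_of_pos hPpos x
    have hQy : (0:ℝ) < Q ^ y := Real.rpow_pos_of_pos hQpos y
    calc p i ^ x * q i ^ y = (P ^ x * Q ^ y) * (p i ^ x / P ^ x * (q i ^ y / Q ^ y)) := by
          field_simp
      _ ≤ P ^ x * Q ^ y * (x * (p i / P) + y * (q i / Q)) := by
          apply mul_le_mul_of_nonneg_left this (mul_pos hPx hQy).le
  have hboundstrict : p i₂ ^ x * q i₂ ^ y < P ^ x * Q ^ y * (x * (p i₂ / P) + y * (q i₂ / Q)) := by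
    have := gm_lt (div_nonneg (hpnn i₂) hPpos.le) (div_nonneg (hqnn i₂) hQpos.le) hi₂ hx hy hxy
    rw [Real.div_rpow (hpnn i₂) hPpos.le, Real.div_rpow (hqnn i₂) hQpos.le] at this
    have hPx : (0:ℝ) < P ^ x := Real.rpow_pos_of_pos hPpos x
    have hQy : (0:ℝ) < Q ^ y := Real.rpow_pos_of_pos hQpos y
    calc p i₂ ^ x * q i₂ ^ y = (P ^ x * Q ^ y) * (p i₂ ^ x / P ^ x * (q i₂ ^ y / Q ^ y)) := by
          field_simp
      _ < P ^ x * Q ^ y * (x * (p i₂ / P) + y * (q i₂ / Q)) := by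
          apply mul_lt_mul_of_pos_left this (mul_pos hPx hQy)
  calc ∑ i, a i * Real.exp (x * u i + y * v i) = ∑ i, p i ^ x * q i ^ y := by
        exact Finset.sum_congr rfl fun i _ => hterm i
    _ < ∑ i, P ^ x * Q ^ y * (x * (p i / P) + y * (q i / Q)) :=
        Finset.sum_lt_sum (fun i _ => hbound i) ⟨i₂, Finset.mem_univ _, hboundstrict⟩
    _ = P ^ x * Q ^ y := by
        rw [← Finset.mul_sum]
        have : ∑ i, (x * (p i / P) + y * (q i / Q)) = x * (P / P) + y * (Q / Q) := by
          rw [Finset.sum_add_distrib, ← Finset.mul_sum, ← Finset.mul_sum,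
            ← Finset.sum_div, ← Finset.sum_div]
        rw [this, div_self hPpos.ne', div_self hQpos.ne']
        rw [mul_one, mul_one, hxy, mul_one]

lemma lineStrict {ι : Type*} [Fintype ι] (a v c : ι → ℝ) (ha : ∀ i, 0 ≤ a i)
    (hmix : ∃ i i', a i ≠ 0 ∧ a i' ≠ 0 ∧ c i ≠ c i') :
    StrictConvexOn ℝ Set.univ (fun x => Real.log (∑ i, a i * Real.exp (v i + c i * x))) := by
  obtain ⟨i₀, i₁, h0, h1, hc⟩ := hmix
  refine ⟨convex_univ, ?_⟩
  intro x₁ _ x₂ _ hne p q hp hq hpq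
  simp only [smul_eq_mul]
  have hkey := key_holder a (fun i => v i + c i * x₁) (fun i => v i + c i * x₂) ha hp hq hpq
    ⟨i₀, i₁, h0, h1, by
      intro h
      apply hc
      have : c i₀ * (x₁ - x₂) = c i₁ * (x₁ - x₂) := by ring_nf at h ⊢; linarith
      exact mul_right_cancel₀ (sub_ne_zero.2 hne) this⟩
  have harg : ∀ i, p * (v i + c i * x₁) + q * (v i + c i * x₂) = v i + c i * (p * x₁ + q * x₂) := by
    intro i; linear_combination (v i) * hpq
  have hpos1 : 0 < ∑ i, a i * Real.exp (v i + c i * x₁) := sumExp_pos a _ ha ⟨i₀, h0⟩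
  have hpos2 : 0 < ∑ i, a i * Real.exp (v i + c i * x₂) := sumExp_pos a _ ha ⟨i₀, h0⟩
  calc Real.log (∑ i, a i * Real.exp (v i + c i * (p * x₁ + q * x₂)))
      = Real.log (∑ i, a i * Real.exp (p * (v i + c i * x₁) + q * (v i + c i * x₂))) := by
        congr 1; exact Finset.sum_congr rfl fun i _ => by rw [harg i]
    _ < Real.log ((∑ i, a i * Real.exp (v i + c i * x₁)) ^ p *
          (∑ i, a i * Real.exp (v i + c i * x₂)) ^ q) :=
        Real.log_lt_log (sumExp_pos a _ ha ⟨i₀, h0⟩) hkey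
    _ = p * Real.log (∑ i, a i * Real.exp (v i + c i * x₁)) +
          q * Real.log (∑ i, a i * Real.exp (v i + c i * x₂)) := by
        rw [Real.log_mul (Real.rpow_pos_of_pos hpos1 p).ne' (Real.rpow_pos_of_pos hpos2 q).ne',
          Real.log_rpow hpos1, Real.log_rpow hpos2]

lemma span_pair {ι : Type*} [Fintype ι] {d : ℕ} (a : ι → ℝ) (α : ι → Fin d → ℕ)
    (hspan : Submodule.span ℝ
        {x : Fin d → ℝ | ∃ i i', a i ≠ 0 ∧ a i' ≠ 0 ∧
          x = fun j => (α i j : ℝ) - (α i' j : ℝ)} = ⊤)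
    {w : Fin d → ℝ} (hw : w ≠ 0) :
    ∃ i i', a i ≠ 0 ∧ a i' ≠ 0 ∧ ∑ j, ((α i j : ℝ) - (α i' j : ℝ)) * w j ≠ 0 := by
  by_contra hcon
  push_neg at hcon
  apply hw
  set L : (Fin d → ℝ) →ₗ[ℝ] ℝ :=
    { toFun := fun x => ∑ j, x j * w j,
      map_add' := fun x y => by simp [add_mul, Finset.sum_add_distrib],
      map_smul' := fun m x => by simp [Finset.mul_sum, mul_assoc] } with hL
  have hker : Submodule.span ℝ {x : Fin d → ℝ | ∃ i i', a i ≠ 0 ∧ a i' ≠ 0 ∧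
      x = fun j => (α i j : ℝ) - (α i' j : ℝ)} ≤ LinearMap.ker L := by
    rw [Submodule.span_le]
    rintro x ⟨i, i', h1, h2, rfl⟩
    simpa [hL] using hcon i i' h1 h2
  rw [hspan, top_le_iff] at hker
  have hLw : L w = 0 := by rw [← LinearMap.mem_ker, hker]; trivial
  have hw0 : ∑ j, w j * w j = 0 := hLw
  funext j
  have := (Finset.sum_eq_zero_iff_of_nonneg (fun j _ => mul_self_nonneg (w j))).mp hw0 j
    (Finset.mem_univ j)
  simpa [mul_self_eq_zero] using this

lemma hasDeriv_logSum {ι : Type*} [Fintype ι] (a b c : ι → ℝ) (ha : ∀ i, 0 ≤ a i)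
    (hne : ∃ i, a i ≠ 0) (x : ℝ) :
    HasDerivAt (fun s => Real.log (∑ i, a i * Real.exp (b i + c i * s)))
      ((∑ i, a i * c i * Real.exp (b i + c i * x)) / (∑ i, a i * Real.exp (b i + c i * x))) x := by
  have hsum : HasDerivAt (fun s => ∑ i, a i * Real.exp (b i + c i * s))
      (∑ i, a i * c i * Real.exp (b i + c i * x)) x := by
    refine HasDerivAt.fun_sum fun i _ => ?_
    have h1 : HasDerivAt (fun s : ℝ => b i + c i * s) (c i) x := by
      simpa using ((hasDerivAt_id x).const_mul (c i)).const_add (b i)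
    have := h1.exp.const_mul (a i)
    convert this using 1
    · rfl
    · ring
  exact hsum.log (sumExp_pos a _ ha hne).ne'

/-- The value of the polynomial `Z(c) = ∑_i a_i c^{α_i}` at `c_j = exp (t_j)`. -/
noncomputable def polyVal {ι : Type*} [Fintype ι] {d : ℕ} (a : ι → ℝ)
    (α : ι → Fin d → ℕ) (t : Fin d → ℝ) : ℝ :=
  ∑ i, a i * Real.exp (∑ j, (α i j : ℝ) * t j)

/-- If the differences of exponent vectors of `Z` span `ℝ^d`, then `log Z` is strictly
convex in the log variables, so its gradient map is injective. -/
theorem logZ_strictConvex_and_gradient_injective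
    {ι : Type*} [Fintype ι] {d : ℕ} (a : ι → ℝ) (α : ι → Fin d → ℕ)
    (ha : ∀ i, 0 ≤ a i) (hne : ∃ i, a i ≠ 0)
    (hspan : Submodule.span ℝ
        {x : Fin d → ℝ | ∃ i i', a i ≠ 0 ∧ a i' ≠ 0 ∧
          x = fun j => (α i j : ℝ) - (α i' j : ℝ)} = ⊤) :
    StrictConvexOn ℝ Set.univ (fun t => Real.log (polyVal a α t))
    ∧ Function.Injective (fun t : Fin d → ℝ => fun i : Fin d =>
        deriv (fun s => Real.log (polyVal a α
          (fun k => t k + s * (if k = i then 1 else 0)))) 0) := by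
  have hdiff : ∀ (t s : Fin d → ℝ) (i i' : ι),
      ((∑ j, (α i j : ℝ) * t j) - ∑ j, (α i j : ℝ) * s j)
        - ((∑ j, (α i' j : ℝ) * t j) - ∑ j, (α i' j : ℝ) * s j)
      = ∑ j, ((α i j : ℝ) - (α i' j : ℝ)) * (t j - s j) := by
    intro t s i i'
    rw [← Finset.sum_sub_distrib, ← Finset.sum_sub_distrib, ← Finset.sum_sub_distrib]
    exact Finset.sum_congr rfl fun j _ => by ring
  constructor
  · refine ⟨convex_univ, ?_⟩
    intro t _ s _ hts x y hx hy hxy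
    obtain ⟨i₀, i₁, h0, h1, hc⟩ := span_pair a α hspan (sub_ne_zero.2 hts)
    simp only [Pi.sub_apply] at hc
    have hmix : ∃ i i', a i ≠ 0 ∧ a i' ≠ 0 ∧
        (∑ j, (α i j : ℝ) * t j) - (∑ j, (α i j : ℝ) * s j)
          ≠ (∑ j, (α i' j : ℝ) * t j) - (∑ j, (α i' j : ℝ) * s j) := by
      refine ⟨i₀, i₁, h0, h1, fun hEq => hc ?_⟩
      rw [← hdiff t s i₀ i₁, hEq, sub_self]
    have hkey := key_holder a (fun k => ∑ j, (α k j : ℝ) * t j)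
      (fun k => ∑ j, (α k j : ℝ) * s j) ha hx hy hxy hmix
    have hpos1 : 0 < polyVal a α t := sumExp_pos a _ ha hne
    have hpos2 : 0 < polyVal a α s := sumExp_pos a _ ha hne
    simp only [smul_eq_mul]
    have hsum : ∀ k, (∑ j, (α k j : ℝ) * (x • t + y • s) j)
        = x * (∑ j, (α k j : ℝ) * t j) + y * (∑ j, (α k j : ℝ) * s j) := by
      intro k
      rw [Finset.mul_sum, Finset.mul_sum, ← Finset.sum_add_distrib]
      refine Finset.sum_congr rfl fun j _ => ?_
      simp only [Pi.add_apply, Pi.smul_apply, smul_eq_mul]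
      ring
    calc Real.log (polyVal a α (x • t + y • s))
        = Real.log (∑ k, a k * Real.exp
            (x * (∑ j, (α k j : ℝ) * t j) + y * (∑ j, (α k j : ℝ) * s j))) := by
          congr 1
          simp only [polyVal]
          exact Finset.sum_congr rfl fun k _ => by rw [hsum k]
      _ < Real.log (polyVal a α t ^ x * polyVal a α s ^ y) :=
          Real.log_lt_log (sumExp_pos a _ ha hne) hkey
      _ = x * Real.log (polyVal a α t) + y * Real.log (polyVal a α s) := by
          rw [Real.log_mul (Real.rpow_pos_of_pos hpos1 x).ne'
            (Real.rpow_pos_of_pos hpos2 y).ne', Real.log_rpow hpos1, Real.log_rpow hpos2]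
  · have hgrad : ∀ t : Fin d → ℝ, (fun i : Fin d =>
        deriv (fun s => Real.log (polyVal a α
          (fun k => t k + s * (if k = i then 1 else 0)))) 0)
        = fun i : Fin d => (∑ k, a k * (α k i : ℝ) * Real.exp (∑ j, (α k j : ℝ) * t j))
            / polyVal a α t := by
      intro t
      funext i
      have heq : (fun s => Real.log (polyVal a α (fun k => t k + s * (if k = i then 1 else 0))))
          = fun s => Real.log (∑ k, a k * Real.exp
              ((∑ j, (α k j : ℝ) * t j) + (α k i : ℝ) * s)) := by
        funext s
        congr 1
        refine Finset.sum_congr rfl fun k _ => ?_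
        congr 1
        rw [show (fun j => (α k j : ℝ) * (t j + s * (if j = i then 1 else 0)))
            = fun j => (α k j : ℝ) * t j + (if j = i then (α k j : ℝ) * s else 0) from
          funext fun j => by by_cases h : j = i <;> simp [h]; ring]
        rw [Finset.sum_add_distrib, Finset.sum_ite_eq' Finset.univ i fun j => (α k j : ℝ) * s]
        simp
      rw [heq]
      have h := hasDeriv_logSum a (fun k => ∑ j, (α k j : ℝ) * t j)
        (fun k => (α k i : ℝ)) ha hne 0
      have := h.deriv
      simpa [polyVal] using this
    intro t s h
    simp only [hgrad] at h
    by_contra hts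
    obtain ⟨i₀, i₁, h0, h1, hc⟩ := span_pair a α hspan (sub_ne_zero.2 hts)
    simp only [Pi.sub_apply] at hc
    set c : ι → ℝ := fun k => ∑ j, (α k j : ℝ) * (t j - s j) with hcdef
    set v : ι → ℝ := fun k => ∑ j, (α k j : ℝ) * s j with hvdef
    have hvc : ∀ k, v k + c k = ∑ j, (α k j : ℝ) * t j := by
      intro k
      simp only [hcdef, hvdef]
      rw [← Finset.sum_add_distrib]
      exact Finset.sum_congr rfl fun j _ => by ring
    have hcc : c i₀ ≠ c i₁ := by
      intro hEq
      apply hc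
      have h2 : c i₀ - c i₁ = ∑ j, ((α i₀ j : ℝ) - (α i₁ j : ℝ)) * (t j - s j) := by
        simp only [hcdef]
        rw [← Finset.sum_sub_distrib]
        exact Finset.sum_congr rfl fun j _ => by ring
      rw [← h2, hEq, sub_self]
    have hφ := lineStrict a v c ha ⟨i₀, i₁, h0, h1, hcc⟩
    have hD0 := hasDeriv_logSum a v c ha hne 0
    have hD1 := hasDeriv_logSum a v c ha hne 1
    have hlt := lt_trans
      (hφ.lt_slope_of_hasDerivAt (Set.mem_univ (0:ℝ)) (Set.mem_univ 1) one_pos hD0)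
      (hφ.slope_lt_of_hasDerivAt (Set.mem_univ (0:ℝ)) (Set.mem_univ 1) one_pos hD1)
    apply ne_of_lt hlt
    have hnum : ∀ (w : ι → ℝ), ∑ k, a k * c k * Real.exp (w k)
        = ∑ j, (t j - s j) * ∑ k, a k * (α k j : ℝ) * Real.exp (w k) := by
      intro w
      calc ∑ k, a k * c k * Real.exp (w k)
          = ∑ k, ∑ j, (t j - s j) * (a k * (α k j : ℝ) * Real.exp (w k)) := by
            refine Finset.sum_congr rfl fun k _ => ?_
            simp only [hcdef]
            rw [Finset.mul_sum, Finset.sum_mul]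
            exact Finset.sum_congr rfl fun j _ => by ring
        _ = ∑ j, (t j - s j) * ∑ k, a k * (α k j : ℝ) * Real.exp (w k) := by
            rw [Finset.sum_comm]
            exact Finset.sum_congr rfl fun j _ => by rw [Finset.mul_sum]
    have hval : ∀ (w : ι → ℝ), (∑ k, a k * c k * Real.exp (w k)) / (∑ k, a k * Real.exp (w k))
        = ∑ j, (t j - s j) * ((∑ k, a k * (α k j : ℝ) * Real.exp (w k))
            / (∑ k, a k * Real.exp (w k))) := by
      intro w
      rw [hnum w, Finset.sum_div]
      exact Finset.sum_congr rfl fun j _ => by rw [mul_div_assoc]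
    have e1 : ∀ k, v k + c k * 1 = ∑ j, (α k j : ℝ) * t j := by
      intro k; rw [mul_one, hvc k]
    calc (∑ k, a k * c k * Real.exp (v k + c k * 0)) / (∑ k, a k * Real.exp (v k + c k * 0))
        = ∑ j, (t j - s j) * ((∑ k, a k * (α k j : ℝ) * Real.exp (v k))
            / (∑ k, a k * Real.exp (v k))) := by
          simp only [mul_zero, add_zero]
          exact hval v
      _ = ∑ j, (t j - s j) * ((∑ k, a k * (α k j : ℝ) * Real.exp (∑ j', (α k j' : ℝ) * t j'))
            / (∑ k, a k * Real.exp (∑ j', (α k j' : ℝ) * t j'))) := by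
          refine Finset.sum_congr rfl fun j _ => ?_
          have hj := congrFun h j
          simp only [polyVal] at hj
          simp only [hvdef]
          rw [← hj]
      _ = (∑ k, a k * c k * Real.exp (v k + c k * 1)) / (∑ k, a k * Real.exp (v k + c k * 1)) := by
          simp only [e1]
          exact (hval _).symm
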